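/- For every k, j ∈ {1,2,3} and every Q ≠ P, the divergence (in Q) of the stress field σ_{kjl}(Q,P) = (1/(16πμ)) [ R_k R_l R_j/r³ + ( R_l δ_{kj} + R_k δ_{jl} − R_j δ_{kl} )/r ] over the index l recovers the Stokeslet: ∑_{l=1}^{3} ∂σ_{kjl}(Q,P)/∂q_l = U_{kj}(Q,P) = (1/(8πμ))(δ_{kj}/r + R_k R_j/r³). -/

import Mathlib

open Real

abbrev E3 := EuclideanSpace ℝ (Fin 3)

/-- Partial derivative of a scalar function on ℝ³ with respect to the `l`-th coordinate. -/
noncomputable def pd3 (f : EuclideanSpace ℝ (Fin 3) → ℝ) (l : Fin 3)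
    (Q : EuclideanSpace ℝ (Fin 3)) : ℝ :=
  fderiv ℝ f Q (EuclideanSpace.single l 1)

lemma hasFDerivAt_coord (P : E3) (m : Fin 3) (Q : E3) :
    HasFDerivAt (fun Q' : E3 => (Q' - P) m) (EuclideanSpace.proj m : E3 →L[ℝ] ℝ) Q := by
  have h : HasFDerivAt (fun Q' : E3 => Q' - P) (ContinuousLinearMap.id ℝ E3) Q :=
    (hasFDerivAt_id Q).sub_const P
  have := ((EuclideanSpace.proj m : E3 →L[ℝ] ℝ).hasFDerivAt (x := Q - P)).comp Q h
  exact this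

lemma hasFDerivAt_normsub (P Q : E3) (hQ : Q ≠ P) :
    HasFDerivAt (fun Q' : E3 => ‖Q' - P‖)
      ((1 / (2 * ‖Q - P‖)) •
        (∑ i : Fin 3, (2 * (Q - P) i ^ 1) • (EuclideanSpace.proj i : E3 →L[ℝ] ℝ))) Q := by
  have hr : ‖Q - P‖ ≠ 0 := by
    simp [sub_eq_zero, hQ]
  have hg : HasFDerivAt (fun Q' : E3 => ∑ i : Fin 3, (Q' - P) i ^ 2)
      (∑ i : Fin 3, (2 * (Q - P) i ^ 1) • (EuclideanSpace.proj i : E3 →L[ℝ] ℝ)) Q := by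
    apply HasFDerivAt.fun_sum
    intro i _
    exact (hasDerivAt_pow 2 _).comp_hasFDerivAt Q (hasFDerivAt_coord P i Q)
  have hgQ : (∑ i : Fin 3, ((Q : E3) - P) i ^ 2) ≠ 0 := by
    have : ‖Q - P‖ ^ 2 = ∑ i : Fin 3, (Q - P) i ^ 2 := by
      rw [EuclideanSpace.norm_eq, Real.sq_sqrt (by positivity)]
      simp [Real.norm_eq_abs, sq_abs]
    rw [← this]; positivity
  have hsq := (Real.hasDerivAt_sqrt hgQ).comp_hasFDerivAt Q hg
  have hfun : (fun Q' : E3 => ‖Q' - P‖) =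
      (Real.sqrt ∘ fun Q' : E3 => ∑ i : Fin 3, (Q' - P) i ^ 2) := by
    funext Q'
    simp [Function.comp, EuclideanSpace.norm_eq, Real.norm_eq_abs, sq_abs]
  rw [hfun]
  refine hsq.congr_fderiv ?_
  rw [EuclideanSpace.norm_eq]
  congr 1
  simp [Real.norm_eq_abs, sq_abs]

lemma pd3_sigma (μ : ℝ) (hμ : 0 < μ) (P : E3) (k j l : Fin 3) (Q : E3) (hQ : Q ≠ P) :
    pd3 (fun Q'' =>
          (1 / (16 * π * μ)) *
            ((Q'' - P) k * (Q'' - P) l * (Q'' - P) j / ‖Q'' - P‖ ^ 3 +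
              ((Q'' - P) l * (if k = j then (1 : ℝ) else 0) +
                (Q'' - P) k * (if j = l then (1 : ℝ) else 0) -
                (Q'' - P) j * (if k = l then (1 : ℝ) else 0)) / ‖Q'' - P‖)) l Q =
    (1 / (16 * π * μ)) *
      (((if k = l then (1 : ℝ) else 0) * (Q - P) l * (Q - P) j
          + (Q - P) k * (Q - P) j
          + (Q - P) k * (Q - P) l * (if j = l then (1 : ℝ) else 0)) / ‖Q - P‖ ^ 3
        - 3 * (Q - P) k * (Q - P) l * (Q - P) j * (Q - P) l / ‖Q - P‖ ^ 5
        + (if k = j then (1 : ℝ) else 0) / ‖Q - P‖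
        - ((Q - P) l * (if k = j then (1 : ℝ) else 0) +
            (Q - P) k * (if j = l then (1 : ℝ) else 0) -
            (Q - P) j * (if k = l then (1 : ℝ) else 0)) * (Q - P) l / ‖Q - P‖ ^ 3) := by
  have hr : ‖Q - P‖ ≠ 0 := by simp [sub_eq_zero, hQ]
  have hrpos : (0:ℝ) < ‖Q - P‖ := (norm_nonneg _).lt_of_ne' hr
  have hc := fun m => hasFDerivAt_coord P m Q
  have hn := hasFDerivAt_normsub P Q hQ
  have hr3 : ‖Q - P‖ ^ 3 ≠ 0 := pow_ne_zero _ hr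
  -- numerator A
  have hnumA := ((hc k).mul (hc l)).mul (hc j)
  have hden3 := (hasDerivAt_pow 3 ‖Q - P‖).comp_hasFDerivAt Q hn
  have hinv3 := (hasDerivAt_inv hr3).comp_hasFDerivAt Q hden3
  have hA := (hnumA.mul hinv3).congr_of_eventuallyEq
    (Filter.Eventually.of_forall (fun y => by
      show (y - P) k * (y - P) l * (y - P) j / ‖y - P‖ ^ 3 = _
      simp [div_eq_mul_inv, Function.comp]))
  have hinv1 := (hasDerivAt_inv hr).comp_hasFDerivAt Q hn
  have hnumB := (((hc l).mul_const (if k = j then (1:ℝ) else 0)).add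
      ((hc k).mul_const (if j = l then (1:ℝ) else 0))).sub
      ((hc j).mul_const (if k = l then (1:ℝ) else 0))
  have hB := (hnumB.mul hinv1).congr_of_eventuallyEq
    (Filter.Eventually.of_forall (fun y => by
      show ((y - P) l * (if k = j then (1:ℝ) else 0) +
        (y - P) k * (if j = l then (1:ℝ) else 0) -
        (y - P) j * (if k = l then (1:ℝ) else 0)) / ‖y - P‖ = _
      simp [div_eq_mul_inv, Function.comp]))
  have hf := (hA.add hB).const_mul (1 / (16 * π * μ))
  rw [pd3]
  erw [hf.fderiv]
  simp only [ContinuousLinearMap.smul_apply, ContinuousLinearMap.add_apply,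
    ContinuousLinearMap.sub_apply, ContinuousLinearMap.coe_smul', Pi.smul_apply,
    ContinuousLinearMap.sum_apply, PiLp.proj_apply,
    EuclideanSpace.single_apply, smul_eq_mul, Function.comp_apply,
    mul_ite, ite_mul, mul_one, mul_zero, one_mul, zero_mul,
    Finset.sum_ite_eq, Finset.sum_ite_eq', Finset.mem_univ, if_true,
    Pi.mul_apply, Pi.add_apply, Pi.sub_apply, Pi.ofNat_apply]
  by_cases hkl : k = l <;> by_cases hjl : j = l
  · subst hkl; subst hjl
    simp only [if_pos rfl, eq_self_iff_true, reduceIte]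
    field_simp
    ring
  · subst hkl
    simp only [if_pos rfl, if_neg hjl, if_neg (Ne.symm hjl), eq_self_iff_true, reduceIte]
    field_simp
    ring
  · subst hjl
    simp only [if_pos rfl, if_neg hkl, if_neg (Ne.symm hkl), eq_self_iff_true, reduceIte]
    field_simp
    ring
  · by_cases hkj : k = j
    · subst hkj
      simp only [if_neg hkl, if_neg hjl, if_neg (Ne.symm hkl), if_neg (Ne.symm hjl), if_pos rfl, eq_self_iff_true, reduceIte]
      field_simp
      ring
    · simp only [if_neg hkl, if_neg hjl, if_neg (Ne.symm hkl), if_neg (Ne.symm hjl), if_neg hkj, reduceIte]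
      field_simp
      ring

set_option maxHeartbeats 1600000 in
/-- The divergence (in Q, over the index l) of the stress field
σ_{kjl} = (1/(16πμ)) [ R_k R_l R_j/r³ + ( R_l δ_{kj} + R_k δ_{jl} − R_j δ_{kl} )/r ]
recovers the Stokeslet U_{kj}. -/
theorem stress_divergence_eq_stokeslet
    (μ : ℝ) (hμ : 0 < μ) (P : EuclideanSpace ℝ (Fin 3))
    (k j : Fin 3) (Q : EuclideanSpace ℝ (Fin 3)) (hQ : Q ≠ P) :
    (∑ l : Fin 3,
        pd3 (fun Q'' =>
          (1 / (16 * π * μ)) *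
            ((Q'' - P) k * (Q'' - P) l * (Q'' - P) j / ‖Q'' - P‖ ^ 3 +
              ((Q'' - P) l * (if k = j then (1 : ℝ) else 0) +
                (Q'' - P) k * (if j = l then (1 : ℝ) else 0) -
                (Q'' - P) j * (if k = l then (1 : ℝ) else 0)) / ‖Q'' - P‖)) l Q) =
      (1 / (8 * π * μ)) *
        ((if k = j then (1 : ℝ) else 0) / ‖Q - P‖ +
          (Q - P) k * (Q - P) j / ‖Q - P‖ ^ 3) := by
  have hr : ‖Q - P‖ ≠ 0 := by simp [sub_eq_zero, hQ]
  have hS : ‖Q - P‖ ^ 2 = (Q - P) 0 ^ 2 + (Q - P) 1 ^ 2 + (Q - P) 2 ^ 2 := by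
    rw [EuclideanSpace.norm_eq, Real.sq_sqrt (by positivity)]
    simp [Fin.sum_univ_three, Real.norm_eq_abs, sq_abs]
  rw [Fin.sum_univ_three, pd3_sigma μ hμ P k j 0 Q hQ, pd3_sigma μ hμ P k j 1 Q hQ,
    pd3_sigma μ hμ P k j 2 Q hQ]
  have h3 : ‖Q - P‖ ^ 3 = ‖Q - P‖ * ((Q - P) 0 ^ 2 + (Q - P) 1 ^ 2 + (Q - P) 2 ^ 2) := by
    rw [← hS]; ring
  have h5 : ‖Q - P‖ ^ 5 = ‖Q - P‖ * ((Q - P) 0 ^ 2 + (Q - P) 1 ^ 2 + (Q - P) 2 ^ 2) ^ 2 := by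
    rw [← hS]; ring
  have hs0 : (Q - P) 0 ^ 2 + (Q - P) 1 ^ 2 + (Q - P) 2 ^ 2 ≠ 0 := by rw [← hS]; positivity
  rw [h3, h5]
  set R := ‖Q - P‖ with hR
  set X0 := (Q - P) 0 with hX0
  set X1 := (Q - P) 1 with hX1
  set X2 := (Q - P) 2 with hX2
  clear_value R X0 X1 X2
  fin_cases k <;> fin_cases j <;>
    · simp only [Fin.zero_eta, Fin.mk_one, Fin.reduceFinMk, Fin.reduceEq, reduceIte,
        Fin.isValue, ← hX0, ← hX1, ← hX2]
      field_simp
      ring
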